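/- arXiv:math/0605299 — 4 statements merged into one kernel-verified Lean document; each statement's English description precedes it below -/
import Mathlib

section
/- Let H be a Hilbert space and let U₁, U₂ be commuting contractions on H. Then for every ξ ∈ H, the double averages (1/(k₁k₂))·Σ_{i=0}^{k₁−1} Σ_{j=0}^{k₂−1} U₁^i U₂^j ξ converge in norm, as (k₁,k₂) → ∞ in Pringsheim's sense, to P ξ, where P is the orthogonal projection onto {η ∈ H : U₁η = η and U₂η = η}. -/
open Finset Filter

/-- A contraction on a Hilbert space fixes a vector iff its adjoint does. -/
lemma fix_of_adjoint_fix {H : Type*} [NormedAddCommGroup H]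
    [InnerProductSpace ℂ H] [CompleteSpace H]
    (U : H →L[ℂ] H) (hU : ‖U‖ ≤ 1) (w : H)
    (hw : ContinuousLinearMap.adjoint U w = w) : U w = w := by
  have h1 : ‖U w‖ ≤ ‖w‖ := by
    calc ‖U w‖ ≤ ‖U‖ * ‖w‖ := U.le_opNorm w
      _ ≤ 1 * ‖w‖ := mul_le_mul_of_nonneg_right hU (norm_nonneg w)
      _ = ‖w‖ := one_mul _
  have h2 : (inner ℂ (U w) w : ℂ) = inner ℂ w w := by
    rw [← ContinuousLinearMap.adjoint_inner_right U w w, hw]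
  have h3 : ‖U w - w‖ ^ 2 ≤ 0 := by
    have hnorm := @norm_sub_sq ℂ H _ _ _ (U w) w
    have hre : RCLike.re (inner ℂ (U w) w : ℂ) = ‖w‖ ^ 2 := by
      rw [h2]
      exact inner_self_eq_norm_sq (𝕜 := ℂ) w
    rw [hnorm, hre]
    nlinarith [norm_nonneg w, norm_nonneg (U w)]
  have h4 : ‖U w - w‖ = 0 := by
    nlinarith [norm_nonneg (U w - w)]
  have := norm_eq_zero.mp h4
  exact sub_eq_zero.mp this

/-- Two-parameter mean ergodic theorem: for commuting contractions `U₁, U₂` on a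
complex Hilbert space, the double averages converge in norm, in Pringsheim's
sense, to `P ξ` where `P` is the orthogonal projection onto the joint
fixed-point subspace. -/
theorem double_mean_ergodic {H : Type*} [NormedAddCommGroup H]
    [InnerProductSpace ℂ H] [CompleteSpace H]
    (U₁ U₂ : H →L[ℂ] H) (hU₁ : ‖U₁‖ ≤ 1) (hU₂ : ‖U₂‖ ≤ 1)
    (hcomm : U₁ * U₂ = U₂ * U₁)
    (P : H →L[ℂ] H)
    -- `P` is the orthogonal projection onto `{η | U₁ η = η ∧ U₂ η = η}`:
    (hPmem : ∀ ξ : H, U₁ (P ξ) = P ξ ∧ U₂ (P ξ) = P ξ)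
    (hPid : ∀ η : H, U₁ η = η → U₂ η = η → P η = η)
    (hPorth : ∀ (ξ η : H), U₁ η = η → U₂ η = η → inner ℂ (ξ - P ξ) η = (0 : ℂ)) :
    ∀ ξ : H, ∀ ε > (0 : ℝ), ∃ N : ℕ, ∀ k₁ k₂ : ℕ, N ≤ k₁ → N ≤ k₂ →
      ‖((k₁ : ℂ) * (k₂ : ℂ))⁻¹ •
          (∑ i ∈ range k₁, ∑ j ∈ range k₂, ((U₁ ^ i) * (U₂ ^ j)) ξ) - P ξ‖ < ε := by
  classical
  intro ξ ε hε
  -- powers of contractions are contractions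
  have hpow : ∀ (U : H →L[ℂ] H), ‖U‖ ≤ 1 → ∀ (i : ℕ) (x : H), ‖(U ^ i) x‖ ≤ ‖x‖ := by
    intro U hU i
    induction i with
    | zero => intro x; simp
    | succ n ih =>
      intro x
      rw [pow_succ, ContinuousLinearMap.mul_apply]
      calc ‖(U ^ n) (U x)‖ ≤ ‖U x‖ := ih (U x)
        _ ≤ ‖U‖ * ‖x‖ := U.le_opNorm x
        _ ≤ 1 * ‖x‖ := mul_le_mul_of_nonneg_right hU (norm_nonneg x)
        _ = ‖x‖ := one_mul _
  set S₁ : ℕ → (H →L[ℂ] H) := fun k => ∑ i ∈ range k, U₁ ^ i with hS₁def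
  set S₂ : ℕ → (H →L[ℂ] H) := fun k => ∑ j ∈ range k, U₂ ^ j with hS₂def
  have hSnorm : ∀ (U : H →L[ℂ] H), ‖U‖ ≤ 1 → ∀ (k : ℕ) (x : H),
      ‖(∑ i ∈ range k, U ^ i) x‖ ≤ k * ‖x‖ := by
    intro U hU k x
    rw [ContinuousLinearMap.sum_apply]
    calc ‖∑ i ∈ range k, (U ^ i) x‖ ≤ ∑ i ∈ range k, ‖(U ^ i) x‖ := norm_sum_le _ _
      _ ≤ ∑ i ∈ range k, ‖x‖ := Finset.sum_le_sum fun i _ => hpow U hU i x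
      _ = k * ‖x‖ := by simp [Finset.sum_const, nsmul_eq_mul]
  have hprod : ∀ k₁ k₂ : ℕ,
      S₁ k₁ * S₂ k₂ = ∑ i ∈ range k₁, ∑ j ∈ range k₂, (U₁ ^ i) * (U₂ ^ j) :=
    fun k₁ k₂ => Finset.sum_mul_sum _ _ _ _
  have hsum : ∀ (x : H) (k₁ k₂ : ℕ),
      (∑ i ∈ range k₁, ∑ j ∈ range k₂, ((U₁ ^ i) * (U₂ ^ j)) x)
        = (S₁ k₁ * S₂ k₂) x := by
    intro x k₁ k₂
    rw [hprod]
    simp [ContinuousLinearMap.sum_apply]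
  have hcommS : ∀ k₁ k₂ : ℕ, S₁ k₁ * S₂ k₂ = S₂ k₂ * S₁ k₁ := by
    intro k₁ k₂
    have h : Commute U₁ U₂ := hcomm
    exact Commute.sum_left _ _ _ fun i _ =>
      Commute.sum_right _ _ _ fun j _ => h.pow_pow i j
  have htel : ∀ (U : H →L[ℂ] H) (k : ℕ),
      (∑ i ∈ range k, U ^ i) * (1 - U) = 1 - U ^ k := by
    intro U k
    have h := geom_sum_mul U k
    have : (∑ i ∈ range k, U ^ i) * (1 - U) = -((∑ i ∈ range k, U ^ i) * (U - 1)) := by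
      noncomm_ring
    rw [this, h]
    noncomm_ring
  -- norm of the scalar
  have hcnorm : ∀ k₁ k₂ : ℕ, ‖((k₁ : ℂ) * (k₂ : ℂ))⁻¹‖ = ((k₁ : ℝ) * (k₂ : ℝ))⁻¹ := by
    intro k₁ k₂
    rw [norm_inv, norm_mul]
    simp
  -- the averages are contractions
  have hTcontr : ∀ k₁ k₂ : ℕ, 1 ≤ k₁ → 1 ≤ k₂ → ∀ x : H,
      ‖((k₁ : ℂ) * (k₂ : ℂ))⁻¹ • ((S₁ k₁ * S₂ k₂) x)‖ ≤ ‖x‖ := by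
    intro k₁ k₂ hk₁ hk₂ x
    have hk₁' : (0 : ℝ) < k₁ := by exact_mod_cast hk₁
    have hk₂' : (0 : ℝ) < k₂ := by exact_mod_cast hk₂
    rw [norm_smul, hcnorm, ContinuousLinearMap.mul_apply]
    have h1 : ‖(S₁ k₁) ((S₂ k₂) x)‖ ≤ k₁ * ‖(S₂ k₂) x‖ := hSnorm U₁ hU₁ k₁ _
    have h2 : ‖(S₂ k₂) x‖ ≤ k₂ * ‖x‖ := hSnorm U₂ hU₂ k₂ x
    calc ((k₁ : ℝ) * k₂)⁻¹ * ‖(S₁ k₁) ((S₂ k₂) x)‖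
        ≤ ((k₁ : ℝ) * k₂)⁻¹ * (k₁ * (k₂ * ‖x‖)) := by
          have : ‖(S₁ k₁) ((S₂ k₂) x)‖ ≤ k₁ * (k₂ * ‖x‖) := by
            calc ‖(S₁ k₁) ((S₂ k₂) x)‖ ≤ k₁ * ‖(S₂ k₂) x‖ := h1
              _ ≤ k₁ * (k₂ * ‖x‖) := by
                exact mul_le_mul_of_nonneg_left h2 (by positivity)
          exact mul_le_mul_of_nonneg_left this (by positivity)
      _ = ‖x‖ := by field_simp
  -- the average of the projection is the projection
  have hfixterm : ∀ i j : ℕ, ((U₁ ^ i) * (U₂ ^ j)) (P ξ) = P ξ := by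
    have h2 : ∀ j : ℕ, (U₂ ^ j) (P ξ) = P ξ := by
      intro j
      induction j with
      | zero => simp
      | succ n ih => rw [pow_succ', ContinuousLinearMap.mul_apply, ih, (hPmem ξ).2]
    have h1 : ∀ i : ℕ, (U₁ ^ i) (P ξ) = P ξ := by
      intro i
      induction i with
      | zero => simp
      | succ n ih => rw [pow_succ', ContinuousLinearMap.mul_apply, ih, (hPmem ξ).1]
    intro i j
    rw [ContinuousLinearMap.mul_apply, h2, h1]
  have hPfix : ∀ k₁ k₂ : ℕ, 1 ≤ k₁ → 1 ≤ k₂ →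
      ((k₁ : ℂ) * (k₂ : ℂ))⁻¹ • ((S₁ k₁ * S₂ k₂) (P ξ)) = P ξ := by
    intro k₁ k₂ hk₁ hk₂
    have h : (S₁ k₁ * S₂ k₂) (P ξ) = (k₁ * k₂ : ℕ) • P ξ := by
      rw [← hsum (P ξ) k₁ k₂]
      simp [hfixterm, Finset.sum_const, card_range, mul_smul]
    rw [h]
    have hk₁' : ((k₁ : ℂ)) ≠ 0 := by exact Nat.cast_ne_zero.mpr (Nat.one_le_iff_ne_zero.mp hk₁)
    have hk₂' : ((k₂ : ℂ)) ≠ 0 := by exact Nat.cast_ne_zero.mpr (Nat.one_le_iff_ne_zero.mp hk₂)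
    rw [← Nat.cast_smul_eq_nsmul ℂ, smul_smul]
    push_cast
    rw [inv_mul_cancel₀ (by exact mul_ne_zero hk₁' hk₂'), one_smul]
  -- telescoping bounds
  have key1 : ∀ (a : H) (k₁ k₂ : ℕ), 1 ≤ k₁ → 1 ≤ k₂ →
      ‖((k₁ : ℂ) * (k₂ : ℂ))⁻¹ • ((S₁ k₁ * S₂ k₂) ((1 - U₁) a))‖ ≤ 2 * ‖a‖ / k₁ := by
    intro a k₁ k₂ hk₁ hk₂
    have hk₁' : (0 : ℝ) < k₁ := by exact_mod_cast hk₁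
    have hk₂' : (0 : ℝ) < k₂ := by exact_mod_cast hk₂
    have e1 : (S₁ k₁ * S₂ k₂) ((1 - U₁) a) = (S₂ k₂) (((1 : H →L[ℂ] H) - U₁ ^ k₁) a) := by
      rw [hcommS, ← ContinuousLinearMap.mul_apply, mul_assoc, htel U₁ k₁,
        ContinuousLinearMap.mul_apply]
    have hb : ‖((1 : H →L[ℂ] H) - U₁ ^ k₁) a‖ ≤ 2 * ‖a‖ := by
      rw [ContinuousLinearMap.sub_apply, ContinuousLinearMap.one_apply]
      calc ‖a - (U₁ ^ k₁) a‖ ≤ ‖a‖ + ‖(U₁ ^ k₁) a‖ := norm_sub_le _ _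
        _ ≤ ‖a‖ + ‖a‖ := by linarith [hpow U₁ hU₁ k₁ a]
        _ = 2 * ‖a‖ := by ring
    rw [e1, norm_smul, hcnorm]
    have h2 : ‖(S₂ k₂) (((1 : H →L[ℂ] H) - U₁ ^ k₁) a)‖ ≤ k₂ * (2 * ‖a‖) := by
      calc ‖(S₂ k₂) (((1 : H →L[ℂ] H) - U₁ ^ k₁) a)‖
          ≤ k₂ * ‖((1 : H →L[ℂ] H) - U₁ ^ k₁) a‖ := hSnorm U₂ hU₂ k₂ _
        _ ≤ k₂ * (2 * ‖a‖) := mul_le_mul_of_nonneg_left hb (by positivity)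
    calc ((k₁ : ℝ) * k₂)⁻¹ * ‖(S₂ k₂) (((1 : H →L[ℂ] H) - U₁ ^ k₁) a)‖
        ≤ ((k₁ : ℝ) * k₂)⁻¹ * (k₂ * (2 * ‖a‖)) :=
          mul_le_mul_of_nonneg_left h2 (by positivity)
      _ = 2 * ‖a‖ / k₁ := by field_simp
  have key2 : ∀ (b : H) (k₁ k₂ : ℕ), 1 ≤ k₁ → 1 ≤ k₂ →
      ‖((k₁ : ℂ) * (k₂ : ℂ))⁻¹ • ((S₁ k₁ * S₂ k₂) ((1 - U₂) b))‖ ≤ 2 * ‖b‖ / k₂ := by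
    intro b k₁ k₂ hk₁ hk₂
    have hk₁' : (0 : ℝ) < k₁ := by exact_mod_cast hk₁
    have hk₂' : (0 : ℝ) < k₂ := by exact_mod_cast hk₂
    have e1 : (S₁ k₁ * S₂ k₂) ((1 - U₂) b) = (S₁ k₁) (((1 : H →L[ℂ] H) - U₂ ^ k₂) b) := by
      rw [← ContinuousLinearMap.mul_apply, mul_assoc, htel U₂ k₂,
        ContinuousLinearMap.mul_apply]
    have hb : ‖((1 : H →L[ℂ] H) - U₂ ^ k₂) b‖ ≤ 2 * ‖b‖ := by
      rw [ContinuousLinearMap.sub_apply, ContinuousLinearMap.one_apply]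
      calc ‖b - (U₂ ^ k₂) b‖ ≤ ‖b‖ + ‖(U₂ ^ k₂) b‖ := norm_sub_le _ _
        _ ≤ ‖b‖ + ‖b‖ := by linarith [hpow U₂ hU₂ k₂ b]
        _ = 2 * ‖b‖ := by ring
    rw [e1, norm_smul, hcnorm]
    have h2 : ‖(S₁ k₁) (((1 : H →L[ℂ] H) - U₂ ^ k₂) b)‖ ≤ k₁ * (2 * ‖b‖) := by
      calc ‖(S₁ k₁) (((1 : H →L[ℂ] H) - U₂ ^ k₂) b)‖
          ≤ k₁ * ‖((1 : H →L[ℂ] H) - U₂ ^ k₂) b‖ := hSnorm U₁ hU₁ k₁ _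
        _ ≤ k₁ * (2 * ‖b‖) := mul_le_mul_of_nonneg_left hb (by positivity)
    calc ((k₁ : ℝ) * k₂)⁻¹ * ‖(S₁ k₁) (((1 : H →L[ℂ] H) - U₂ ^ k₂) b)‖
        ≤ ((k₁ : ℝ) * k₂)⁻¹ * (k₁ * (2 * ‖b‖)) :=
          mul_le_mul_of_nonneg_left h2 (by positivity)
      _ = 2 * ‖b‖ / k₂ := by field_simp
  -- ξ - P ξ is in the closure of range (1 - U₁) + range (1 - U₂)
  set V : Submodule ℂ H :=
    LinearMap.range ((1 - U₁ : H →L[ℂ] H) : H →ₗ[ℂ] H) ⊔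
      LinearMap.range ((1 - U₂ : H →L[ℂ] H) : H →ₗ[ℂ] H) with hVdef
  have hmem : ξ - P ξ ∈ Vᗮᗮ := by
    rw [Submodule.mem_orthogonal]
    intro w hw
    rw [Submodule.mem_orthogonal] at hw
    have hadj : ∀ (U : H →L[ℂ] H), (∀ a : H, (inner ℂ ((1 - U) a) w : ℂ) = 0) →
        ContinuousLinearMap.adjoint U w = w := by
      intro U h
      have h' : ∀ a : H, (inner ℂ a (w - ContinuousLinearMap.adjoint U w) : ℂ) = 0 := by
        intro a
        have hh := h a
        rw [ContinuousLinearMap.sub_apply, ContinuousLinearMap.one_apply,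
          inner_sub_left] at hh
        rw [inner_sub_right, ContinuousLinearMap.adjoint_inner_right]
        exact hh
      have h0 := h' (w - ContinuousLinearMap.adjoint U w)
      rw [inner_self_eq_zero] at h0
      exact (sub_eq_zero.mp h0).symm
    have h1 : ∀ a : H, (inner ℂ ((1 - U₁) a) w : ℂ) = 0 := by
      intro a
      exact hw _ (Submodule.mem_sup_left (LinearMap.mem_range.2 ⟨a, rfl⟩))
    have h2 : ∀ b : H, (inner ℂ ((1 - U₂) b) w : ℂ) = 0 := by
      intro b
      exact hw _ (Submodule.mem_sup_right (LinearMap.mem_range.2 ⟨b, rfl⟩))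
    have hw1 : U₁ w = w := fix_of_adjoint_fix U₁ hU₁ w (hadj U₁ h1)
    have hw2 : U₂ w = w := fix_of_adjoint_fix U₂ hU₂ w (hadj U₂ h2)
    exact inner_eq_zero_symm.mp (hPorth ξ w hw1 hw2)
  rw [Submodule.orthogonal_orthogonal_eq_closure] at hmem
  have hmem' : ξ - P ξ ∈ closure (V : Set H) := hmem
  obtain ⟨v, hvV, hdist⟩ := Metric.mem_closure_iff.mp hmem' (ε / 2) (by linarith)
  obtain ⟨y, hy, z, hz, rfl⟩ := Submodule.mem_sup.mp hvV
  obtain ⟨a, rfl⟩ := LinearMap.mem_range.mp hy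
  obtain ⟨b, rfl⟩ := LinearMap.mem_range.mp hz
  -- choose N
  obtain ⟨M, hM⟩ := exists_nat_gt ((2 * ‖a‖ + 2 * ‖b‖) / (ε / 4))
  refine ⟨M + 1, ?_⟩
  intro k₁ k₂ hk₁ hk₂
  have hk₁1 : 1 ≤ k₁ := le_trans (Nat.le_add_left 1 M) hk₁
  have hk₂1 : 1 ≤ k₂ := le_trans (Nat.le_add_left 1 M) hk₂
  have hk₁' : (0 : ℝ) < k₁ := by exact_mod_cast hk₁1
  have hk₂' : (0 : ℝ) < k₂ := by exact_mod_cast hk₂1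
  set c : ℂ := ((k₁ : ℂ) * (k₂ : ℂ))⁻¹ with hc
  set T : H →L[ℂ] H := S₁ k₁ * S₂ k₂ with hT
  rw [hsum ξ k₁ k₂]
  -- split
  have hsplit : c • (T ξ) - P ξ
      = c • (T (ξ - P ξ - (((1 - U₁ : H →L[ℂ] H) : H →ₗ[ℂ] H) a
          + ((1 - U₂ : H →L[ℂ] H) : H →ₗ[ℂ] H) b)))
        + c • (T ((1 - U₁) a)) + c • (T ((1 - U₂) b)) := by
    have hP : c • (T (P ξ)) = P ξ := hPfix k₁ k₂ hk₁1 hk₂1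
    have harg : ξ - P ξ - (((1 - U₁ : H →L[ℂ] H) : H →ₗ[ℂ] H) a
        + ((1 - U₂ : H →L[ℂ] H) : H →ₗ[ℂ] H) b) + (1 - U₁) a + (1 - U₂) b
        = ξ - P ξ := by
      have hcoe1 : (((1 - U₁ : H →L[ℂ] H) : H →ₗ[ℂ] H) a : H) = (1 - U₁) a := rfl
      have hcoe2 : (((1 - U₂ : H →L[ℂ] H) : H →ₗ[ℂ] H) b : H) = (1 - U₂) b := rfl
      rw [hcoe1, hcoe2]
      abel
    rw [← smul_add, ← smul_add, ← map_add, ← map_add, harg, map_sub, smul_sub, hP]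
  rw [hsplit]
  have hb1 : ‖c • (T (ξ - P ξ - (((1 - U₁ : H →L[ℂ] H) : H →ₗ[ℂ] H) a
      + ((1 - U₂ : H →L[ℂ] H) : H →ₗ[ℂ] H) b)))‖ < ε / 2 := by
    calc ‖c • (T (ξ - P ξ - _))‖ ≤ ‖ξ - P ξ - (((1 - U₁ : H →L[ℂ] H) : H →ₗ[ℂ] H) a
        + ((1 - U₂ : H →L[ℂ] H) : H →ₗ[ℂ] H) b)‖ := hTcontr k₁ k₂ hk₁1 hk₂1 _
      _ < ε / 2 := by rwa [dist_eq_norm] at hdist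
  have hb2 : ‖c • (T ((1 - U₁) a))‖ ≤ 2 * ‖a‖ / k₁ := key1 a k₁ k₂ hk₁1 hk₂1
  have hb3 : ‖c • (T ((1 - U₂) b))‖ ≤ 2 * ‖b‖ / k₂ := key2 b k₁ k₂ hk₁1 hk₂1
  have hMk : (2 * ‖a‖ + 2 * ‖b‖) < ε / 4 * (M + 1) := by
    have h4 : (0 : ℝ) < ε / 4 := by linarith
    have := (div_lt_iff₀ h4).mp hM
    nlinarith
  have hk₁M : ((M : ℝ) + 1) ≤ k₁ := by exact_mod_cast hk₁
  have hk₂M : ((M : ℝ) + 1) ≤ k₂ := by exact_mod_cast hk₂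
  have hM1 : (0 : ℝ) < (M : ℝ) + 1 := by positivity
  have hs1 : 2 * ‖a‖ / k₁ ≤ 2 * ‖a‖ / ((M : ℝ) + 1) :=
    div_le_div_of_nonneg_left (by positivity) hM1 hk₁M
  have hs2 : 2 * ‖b‖ / k₂ ≤ 2 * ‖b‖ / ((M : ℝ) + 1) :=
    div_le_div_of_nonneg_left (by positivity) hM1 hk₂M
  have hsum4 : 2 * ‖a‖ / ((M : ℝ) + 1) + 2 * ‖b‖ / ((M : ℝ) + 1) < ε / 4 := by
    rw [← add_div, div_lt_iff₀ hM1]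
    linarith
  calc ‖c • (T (ξ - P ξ - _)) + c • (T ((1 - U₁) a)) + c • (T ((1 - U₂) b))‖
      ≤ ‖c • (T (ξ - P ξ - (((1 - U₁ : H →L[ℂ] H) : H →ₗ[ℂ] H) a
          + ((1 - U₂ : H →L[ℂ] H) : H →ₗ[ℂ] H) b))) + c • (T ((1 - U₁) a))‖
        + ‖c • (T ((1 - U₂) b))‖ := norm_add_le _ _
    _ ≤ ‖c • (T (ξ - P ξ - (((1 - U₁ : H →L[ℂ] H) : H →ₗ[ℂ] H) a
          + ((1 - U₂ : H →L[ℂ] H) : H →ₗ[ℂ] H) b)))‖ + ‖c • (T ((1 - U₁) a))‖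
        + ‖c • (T ((1 - U₂) b))‖ := by
          have := norm_add_le (c • (T (ξ - P ξ - (((1 - U₁ : H →L[ℂ] H) : H →ₗ[ℂ] H) a
            + ((1 - U₂ : H →L[ℂ] H) : H →ₗ[ℂ] H) b)))) (c • (T ((1 - U₁) a)))
          linarith
    _ < ε / 2 + 2 * ‖a‖ / k₁ + 2 * ‖b‖ / k₂ := by linarith
    _ < ε := by linarith
end

section
/- Let B be a reflexive Banach space and T : B → B a linear contraction. Then for every x ∈ B, the Cesàro averages (1/n)·Σ_{k=0}^{n−1} T^k x converge in norm to a T-fixed point. (Mean ergodic theorem in reflexive spaces, used for L^p, 1 < p < ∞.) -/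
open Finset Filter Topology

section aux
variable {𝕜 : Type*} [RCLike 𝕜] {B : Type*} [NormedAddCommGroup B] [NormedSpace 𝕜 B]

/-- Cesàro average operator. -/
noncomputable def ceA (T : B →L[𝕜] B) (n : ℕ) : B →L[𝕜] B :=
  (n : 𝕜)⁻¹ • ∑ k ∈ Finset.range n, T ^ k

variable (T : B →L[𝕜] B)

lemma ceA_apply (n : ℕ) (x : B) :
    ceA T n x = (n : 𝕜)⁻¹ • ∑ k ∈ range n, (T ^ k) x := by
  simp [ceA, ContinuousLinearMap.sum_apply]

lemma pow_norm_le (hT : ‖T‖ ≤ 1) (k : ℕ) : ‖T ^ k‖ ≤ 1 := by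
  induction k with
  | zero =>
    rw [pow_zero]
    simpa [ContinuousLinearMap.one_def] using ContinuousLinearMap.norm_id_le (E := B)
  | succ k ih =>
    calc ‖T ^ (k+1)‖ = ‖T ^ k * T‖ := by rw [pow_succ]
    _ ≤ ‖T ^ k‖ * ‖T‖ := norm_mul_le _ _
    _ ≤ 1 * 1 := mul_le_mul ih hT (norm_nonneg T) zero_le_one
    _ = 1 := one_mul 1

lemma ceA_norm_apply_le (hT : ‖T‖ ≤ 1) (n : ℕ) (z : B) : ‖ceA T n z‖ ≤ ‖z‖ := by
  rcases Nat.eq_zero_or_pos n with rfl | hn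
  · simp [ceA_apply, norm_nonneg]
  rw [ceA_apply, norm_smul]
  have h1 : ‖∑ k ∈ range n, (T ^ k) z‖ ≤ (n : ℝ) * ‖z‖ := by
    calc ‖∑ k ∈ range n, (T ^ k) z‖ ≤ ∑ k ∈ range n, ‖(T ^ k) z‖ := norm_sum_le _ _
    _ ≤ ∑ _k ∈ range n, ‖z‖ := by
        refine Finset.sum_le_sum fun k _ => ?_
        simpa using ContinuousLinearMap.le_of_opNorm_le _ (pow_norm_le T hT k) z
    _ = (n : ℝ) * ‖z‖ := by simp [Finset.sum_const, nsmul_eq_mul]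
  have h2 : ‖((n : 𝕜))⁻¹‖ = (n : ℝ)⁻¹ := by
    rw [norm_inv, RCLike.norm_natCast]
  rw [h2]
  calc (n : ℝ)⁻¹ * ‖∑ k ∈ range n, (T ^ k) z‖ ≤ (n : ℝ)⁻¹ * ((n : ℝ) * ‖z‖) := by
        gcongr
  _ = ‖z‖ := by field_simp

lemma ceA_tele (n : ℕ) (w : B) :
    ∑ k ∈ range n, ((T ^ (k+1)) w - (T ^ k) w) = (T ^ n) w - w := by
  simpa using Finset.sum_range_sub (fun k => (T ^ k) w) n

lemma ceA_range_apply (n : ℕ) (w : B) :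
    ceA T n (T w - w) = (n : 𝕜)⁻¹ • ((T ^ n) w - w) := by
  rw [ceA_apply, ← ceA_tele T n w]
  congr 1
  refine Finset.sum_congr rfl fun k _ => ?_
  simp [map_sub, pow_succ, ContinuousLinearMap.mul_apply]

lemma ceA_fix {z : B} (hz : T z = z) {n : ℕ} (hn : n ≠ 0) : ceA T n z = z := by
  have hk : ∀ k : ℕ, (T ^ k) z = z := by
    intro k
    induction k with
    | zero => simp
    | succ k ih => rw [pow_succ, ContinuousLinearMap.mul_apply, hz, ih]
  rw [ceA_apply]
  simp only [hk, Finset.sum_const, Finset.card_range]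
  rw [← Nat.cast_smul_eq_nsmul 𝕜, smul_smul,
    inv_mul_cancel₀ (by exact_mod_cast hn), one_smul]

lemma T_ceA_sub (n : ℕ) (x : B) :
    T (ceA T n x) - ceA T n x = (n : 𝕜)⁻¹ • ((T ^ n) x - x) := by
  rw [ceA_apply, map_smul, map_sum, ← smul_sub, ← Finset.sum_sub_distrib,
    ← ceA_tele T n x]
  congr 1
  refine Finset.sum_congr rfl fun k _ => ?_
  congr 1
  rw [pow_succ', ContinuousLinearMap.mul_apply]

lemma ceA_sub_self (n : ℕ) (hn : n ≠ 0) (x : B) :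
    ∃ v : B, ceA T n x - x = T v - v := by
  refine ⟨(n : 𝕜)⁻¹ • ∑ k ∈ range n, ∑ j ∈ range k, (T ^ j) x, ?_⟩
  rw [map_smul, ← smul_sub, map_sum, ← Finset.sum_sub_distrib]
  have hk : ∀ k ∈ range n,
      (T (∑ j ∈ range k, (T ^ j) x) - ∑ j ∈ range k, (T ^ j) x) = (T ^ k) x - x := by
    intro k _
    rw [map_sum, ← ceA_tele T k x, ← Finset.sum_sub_distrib]
    refine Finset.sum_congr rfl fun j _ => ?_
    congr 1
    rw [pow_succ', ContinuousLinearMap.mul_apply]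
  rw [Finset.sum_congr rfl hk, Finset.sum_sub_distrib, Finset.sum_const, Finset.card_range,
    smul_sub, ← Nat.cast_smul_eq_nsmul 𝕜, smul_smul,
    inv_mul_cancel₀ (by exact_mod_cast hn : ((n : 𝕜)) ≠ 0), one_smul, ← ceA_apply]

lemma tendsto_ceA_range (hT : ‖T‖ ≤ 1) (w : B) :
    Tendsto (fun n : ℕ => ceA T n (T w - w)) atTop (𝓝 0) := by
  refine squeeze_zero_norm (fun n => ?_) (tendsto_const_div_atTop_nhds_zero_nat (2 * ‖w‖))
  rw [ceA_range_apply, norm_smul, norm_inv, RCLike.norm_natCast, div_eq_inv_mul]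
  gcongr
  calc ‖(T ^ n) w - w‖ ≤ ‖(T ^ n) w‖ + ‖w‖ := norm_sub_le _ _
  _ ≤ ‖w‖ + ‖w‖ := by
      gcongr
      simpa using ContinuousLinearMap.le_of_opNorm_le _ (pow_norm_le T hT n) w
  _ = 2 * ‖w‖ := by ring

lemma tendsto_ceA_closure (hT : ‖T‖ ≤ 1) {z : B}
    (hz : z ∈ closure (Set.range fun w : B => T w - w)) :
    Tendsto (fun n : ℕ => ceA T n z) atTop (𝓝 0) := by
  rw [Metric.tendsto_atTop]
  intro ε hε
  obtain ⟨w', hw'R, hw'z⟩ := Metric.mem_closure_iff.1 hz (ε/2) (by positivity)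
  obtain ⟨w, rfl⟩ := hw'R
  have hw := Metric.tendsto_atTop.1 (tendsto_ceA_range T hT w) (ε/2) (by positivity)
  obtain ⟨N, hN⟩ := hw
  refine ⟨N, fun n hn => ?_⟩
  rw [dist_zero_right]
  calc ‖ceA T n z‖ = ‖ceA T n (z - (T w - w)) + ceA T n (T w - w)‖ := by rw [← map_add, sub_add_cancel]
  _ ≤ ‖ceA T n (z - (T w - w))‖ + ‖ceA T n (T w - w)‖ := norm_add_le _ _
  _ < ε/2 + ε/2 := by
      refine add_lt_add_of_le_of_lt ?_ ?_
      · calc ‖ceA T n (z - (T w - w))‖ ≤ ‖z - (T w - w)‖ := ceA_norm_apply_le T hT n _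
        _ ≤ ε/2 := le_of_lt (by rw [← dist_eq_norm]; exact hw'z)
      · simpa [dist_zero_right] using hN n hn
  _ = ε := by ring

end aux

/-- Mean ergodic theorem in a reflexive Banach space: if `T` is a linear
contraction of a reflexive Banach space `B`, then for every `x` the Cesàro
averages `(1/n) ∑_{k<n} T^k x` converge in norm to a `T`-fixed point. -/
theorem mean_ergodic_reflexive {𝕜 : Type*} [RCLike 𝕜]
    {B : Type*} [NormedAddCommGroup B] [NormedSpace 𝕜 B] [CompleteSpace B]
    (hrefl : Function.Surjective (NormedSpace.inclusionInDoubleDual 𝕜 B))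
    (T : B →L[𝕜] B) (hT : ‖T‖ ≤ 1) :
    ∀ x : B, ∃ y : B, T y = y ∧
      Tendsto (fun n : ℕ => (n : 𝕜)⁻¹ • ∑ k ∈ range n, (T ^ k) x)
        atTop (nhds y) := by
  intro x
  set J := NormedSpace.inclusionInDoubleDual 𝕜 B with hJ
  set u : ℕ → WeakDual 𝕜 (StrongDual 𝕜 B) :=
    fun n => StrongDual.toWeakDual (J (ceA T n x)) with hu
  have humem : ∀ n, u n ∈ (WeakDual.toStrongDual ⁻¹'
      Metric.closedBall (0 : StrongDual 𝕜 (StrongDual 𝕜 B)) ‖x‖) := by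
    intro n
    simp only [Set.mem_preimage, Metric.mem_closedBall, dist_zero_right]
    have h1 : WeakDual.toStrongDual (u n) = J (ceA T n x) := rfl
    rw [h1]
    exact (dist_zero_right (J (ceA T n x))).le.trans
      ((NormedSpace.double_dual_bound 𝕜 B _).trans (ceA_norm_apply_le T hT n x))
  obtain ⟨ξ, -, hξ⟩ := (WeakDual.isCompact_closedBall (𝕜 := 𝕜)
      (0 : StrongDual 𝕜 (StrongDual 𝕜 B)) ‖x‖).exists_mapClusterPt
      (f := atTop) (u := u) (by exact le_principal_iff.2 (mem_map.2 (Eventually.of_forall humem)))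
  obtain ⟨y, hy⟩ := hrefl (WeakDual.toStrongDual ξ)
  -- cluster point property transported through any functional
  have hclus : ∀ ψ : StrongDual 𝕜 B,
      MapClusterPt (ψ y) atTop (fun n => ψ (ceA T n x)) := by
    intro ψ
    have hcont : Continuous fun ζ : WeakDual 𝕜 (StrongDual 𝕜 B) => ζ ψ :=
      WeakDual.eval_continuous ψ
    have h1 := hξ.continuousAt_comp hcont.continuousAt
    have h2 : ((fun ζ : WeakDual 𝕜 (StrongDual 𝕜 B) => ζ ψ) ∘ u)
        = fun n => ψ (ceA T n x) := rfl
    have h3 : ξ ψ = ψ y := by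
      have := congrArg (fun F : StrongDual 𝕜 (StrongDual 𝕜 B) => F ψ) hy
      exact this.symm
    rw [h2, h3] at h1
    exact h1
  have huniq : ∀ {v : ℕ → 𝕜} {a b : 𝕜}, MapClusterPt a atTop v →
      Tendsto v atTop (𝓝 b) → a = b := by
    intro v a b h h'
    exact eq_of_nhds_neBot (h.clusterPt.mono h')
  -- the cluster point is a fixed point
  have hfix : T y = y := by
    have h0 : ∀ φ : StrongDual 𝕜 B, φ (T y - y) = 0 := by
      intro φ
      set ψ : StrongDual 𝕜 B := φ.comp T - φ with hψ
      have hψapp : ∀ z : B, ψ z = φ (T z - z) := by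
        intro z; simp [hψ, map_sub]
      have htend : Tendsto (fun n => ψ (ceA T n x)) atTop (𝓝 0) := by
        refine squeeze_zero_norm (fun n => ?_)
          (tendsto_const_div_atTop_nhds_zero_nat (‖φ‖ * (2 * ‖x‖)))
        rw [hψapp, T_ceA_sub]
        calc ‖φ ((n:𝕜)⁻¹ • ((T^n) x - x))‖
            ≤ ‖φ‖ * ‖(n:𝕜)⁻¹ • ((T^n) x - x)‖ := φ.le_opNorm _
        _ ≤ ‖φ‖ * ((n:ℝ)⁻¹ * (2 * ‖x‖)) := by
            rw [norm_smul, norm_inv, RCLike.norm_natCast]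
            gcongr
            calc ‖(T^n) x - x‖ ≤ ‖(T^n) x‖ + ‖x‖ := norm_sub_le _ _
            _ ≤ ‖x‖ + ‖x‖ := by
                gcongr
                simpa using ContinuousLinearMap.le_of_opNorm_le _ (pow_norm_le T hT n) x
            _ = 2 * ‖x‖ := by ring
        _ = ‖φ‖ * (2 * ‖x‖) / n := by ring
      have hz := huniq (hclus ψ) htend
      rw [hψapp y] at hz
      exact hz
    have := NormedSpace.eq_zero_of_forall_dual_eq_zero 𝕜 h0
    exact sub_eq_zero.1 this
  -- x - y is in the closure of the range of T - 1
  set Prange : Submodule 𝕜 B :=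
    LinearMap.range ((T : B →ₗ[𝕜] B) - LinearMap.id) with hP
  have hPset : (Prange : Set B) = Set.range (fun w : B => T w - w) := by
    ext z
    simp [hP, LinearMap.mem_range, LinearMap.sub_apply, eq_comm]
  have hmemN : x - y ∈ Prange.topologicalClosure := by
    by_contra hnot
    haveI hclosed : IsClosed (Prange.topologicalClosure : Set B) :=
      Submodule.isClosed_topologicalClosure _
    set N := Prange.topologicalClosure with hN
    let π : B →L[𝕜] (B ⧸ N) := N.mkQ.mkContinuous 1
      (fun m => by simpa using Submodule.Quotient.norm_mk_le N m)
    have hπ_apply : ∀ z : B, π z = Submodule.Quotient.mk z := fun z => rfl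
    have hπx : π (x - y) ≠ 0 := by
      rw [hπ_apply]
      intro h0
      exact hnot ((Submodule.Quotient.mk_eq_zero N).1 h0)
    obtain ⟨g, hg1, hgval⟩ := exists_dual_vector 𝕜 (π (x - y)) (norm_ne_zero_iff.2 hπx)
    set φ : StrongDual 𝕜 B := g.comp π with hφ
    have hφ0 : ∀ w : B, φ (T w - w) = 0 := by
      intro w
      have hmem : T w - w ∈ N := Prange.le_topologicalClosure ⟨w, by simp⟩
      have hq : π (T w - w) = 0 := by
        rw [hπ_apply]
        exact (Submodule.Quotient.mk_eq_zero N).2 hmem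
      simp [hφ, ContinuousLinearMap.comp_apply, hq]
    have hconst : Tendsto (fun n => φ (ceA T n x)) atTop (𝓝 (φ x)) := by
      refine tendsto_const_nhds.congr' ?_
      filter_upwards [eventually_ge_atTop 1] with n hn
      obtain ⟨v, hv⟩ := ceA_sub_self T n (by omega) x
      have h0 : φ (ceA T n x) - φ x = 0 := by rw [← map_sub, hv, hφ0]
      exact (sub_eq_zero.1 h0).symm
    have hyx : φ y = φ x := huniq (hclus φ) hconst
    have hφxy : φ (x - y) = 0 := by rw [map_sub, hyx, sub_self]
    have : ((‖π (x - y)‖ : ℝ) : 𝕜) = 0 := by rw [← hgval]; exact hφxy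
    exact hπx (norm_eq_zero.1 (by exact_mod_cast this))
  -- conclusion
  refine ⟨y, hfix, ?_⟩
  have hzero : Tendsto (fun n => ceA T n (x - y)) atTop (𝓝 0) := by
    apply tendsto_ceA_closure T hT
    rw [← hPset]
    exact hmemN
  have h := hzero.add_const y
  rw [zero_add] at h
  have hfinal : Tendsto (fun n => ceA T n x) atTop (𝓝 y) := by
    refine h.congr' ?_
    filter_upwards [eventually_ge_atTop 1] with n hn
    rw [map_sub, ceA_fix T hfix (by omega : n ≠ 0)]
    abel
  exact hfinal.congr (fun n => by rw [ceA_apply])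
end

section
/- Let B be a Banach space, C ⊆ B a weakly compact convex subset, and T : B → B a linear contraction with T(C) ⊆ C. Then for every x ∈ C, the Cesàro averages (1/n)·Σ_{k=0}^{n−1} T^k x converge in norm to some y ∈ C with Ty = y. -/
open Finset Filter

section Aux

variable {B : Type*} [NormedAddCommGroup B] [NormedSpace ℝ B] [CompleteSpace B]

lemma pow_apply_norm_le (T : B →L[ℝ] B) (hT : ‖T‖ ≤ 1) (k : ℕ) (z : B) :
    ‖(T ^ k) z‖ ≤ ‖z‖ := by
  induction k with
  | zero => simp
  | succ k ih =>
      rw [pow_succ', ContinuousLinearMap.mul_apply]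
      calc ‖T ((T ^ k) z)‖ ≤ ‖T‖ * ‖(T ^ k) z‖ := T.le_opNorm _
        _ ≤ 1 * ‖z‖ := mul_le_mul hT ih (norm_nonneg _) zero_le_one
        _ = ‖z‖ := one_mul _

/-- Cesàro average norm bound. -/
lemma avg_norm_le (T : B →L[ℝ] B) (hT : ‖T‖ ≤ 1) (n : ℕ) (z : B) :
    ‖(n : ℝ)⁻¹ • ∑ k ∈ range n, (T ^ k) z‖ ≤ ‖z‖ := by
  rcases Nat.eq_zero_or_pos n with h | h
  · simp [h]
  calc ‖(n : ℝ)⁻¹ • ∑ k ∈ range n, (T ^ k) z‖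
      = (n : ℝ)⁻¹ * ‖∑ k ∈ range n, (T ^ k) z‖ := by
        rw [norm_smul, Real.norm_eq_abs, abs_of_nonneg (by positivity)]
    _ ≤ (n : ℝ)⁻¹ * (n * ‖z‖) := by
        gcongr
        calc ‖∑ k ∈ range n, (T ^ k) z‖ ≤ ∑ k ∈ range n, ‖(T ^ k) z‖ :=
              norm_sum_le _ _
          _ ≤ ∑ _k ∈ range n, ‖z‖ :=
              Finset.sum_le_sum fun k _ => pow_apply_norm_le T hT k z
          _ = n * ‖z‖ := by simp [mul_comm]
    _ = ‖z‖ := by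
        field_simp

/-- Averages of elements of the closure of the range of `1 - T` tend to `0`. -/
lemma avg_tendsto_zero (T : B →L[ℝ] B) (hT : ‖T‖ ≤ 1) (z : B)
    (hz : z ∈ closure (LinearMap.range ((ContinuousLinearMap.id ℝ B - T : B →L[ℝ] B) : B →ₗ[ℝ] B) : Set B)) :
    Tendsto (fun n : ℕ => (n : ℝ)⁻¹ • ∑ k ∈ range n, (T ^ k) z) atTop (nhds 0) := by
  -- first for elements of the range itself
  have key : ∀ w : B, Tendsto
      (fun n : ℕ => (n : ℝ)⁻¹ • ∑ k ∈ range n, (T ^ k) (w - T w)) atTop (nhds 0) := by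
    intro w
    have hsum : ∀ n : ℕ, ∑ k ∈ range n, (T ^ k) (w - T w) = w - (T ^ n) w := by
      intro n
      have : ∀ k : ℕ, (T ^ k) (w - T w) = (T ^ k) w - (T ^ (k + 1)) w := by
        intro k
        rw [map_sub, pow_succ, ContinuousLinearMap.mul_apply]
      calc ∑ k ∈ range n, (T ^ k) (w - T w)
          = ∑ k ∈ range n, ((T ^ k) w - (T ^ (k + 1)) w) := by
            exact Finset.sum_congr rfl fun k _ => this k
        _ = (T ^ 0) w - (T ^ n) w := Finset.sum_range_sub' (fun k => (T ^ k) w) n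
        _ = w - (T ^ n) w := by simp
    have hb : ∀ n : ℕ, ‖(n : ℝ)⁻¹ • ∑ k ∈ range n, (T ^ k) (w - T w)‖
        ≤ (n : ℝ)⁻¹ * (2 * ‖w‖) := by
      intro n
      rw [hsum n, norm_smul, Real.norm_eq_abs, abs_of_nonneg (by positivity)]
      gcongr
      calc ‖w - (T ^ n) w‖ ≤ ‖w‖ + ‖(T ^ n) w‖ := norm_sub_le _ _
        _ ≤ ‖w‖ + ‖w‖ := by gcongr; exact pow_apply_norm_le T hT n w
        _ = 2 * ‖w‖ := by ring
    refine squeeze_zero_norm hb ?_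
    have : Tendsto (fun n : ℕ => (n : ℝ)⁻¹) atTop (nhds 0) :=
      tendsto_inv_atTop_nhds_zero_nat
    simpa using this.mul_const (2 * ‖w‖)
  -- now for the closure, by a 3ε argument
  rw [NormedAddCommGroup.tendsto_atTop]
  intro ε hε
  obtain ⟨z', hz'mem, hz'⟩ := Metric.mem_closure_iff.mp hz (ε / 2) (by linarith)
  obtain ⟨w, hw⟩ := hz'mem
  have hz'0 : Tendsto (fun n : ℕ => (n : ℝ)⁻¹ • ∑ k ∈ range n, (T ^ k) z') atTop (nhds 0) := by
    have : z' = w - T w := by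
      rw [← hw]; simp [ContinuousLinearMap.sub_apply]
    rw [this]; exact key w
  rw [NormedAddCommGroup.tendsto_atTop] at hz'0
  obtain ⟨N, hN⟩ := hz'0 (ε / 2) (by linarith)
  refine ⟨N, fun n hn => ?_⟩
  have h1 : (n : ℝ)⁻¹ • ∑ k ∈ range n, (T ^ k) z
      = (n : ℝ)⁻¹ • ∑ k ∈ range n, (T ^ k) (z - z')
        + (n : ℝ)⁻¹ • ∑ k ∈ range n, (T ^ k) z' := by
    rw [← smul_add, ← Finset.sum_add_distrib]
    congr 1
    refine Finset.sum_congr rfl fun k _ => ?_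
    rw [← map_add]
    congr 1
    abel
  simp only [sub_zero] at hN ⊢
  rw [h1]
  calc ‖(n : ℝ)⁻¹ • ∑ k ∈ range n, (T ^ k) (z - z')
        + (n : ℝ)⁻¹ • ∑ k ∈ range n, (T ^ k) z'‖
      ≤ ‖(n : ℝ)⁻¹ • ∑ k ∈ range n, (T ^ k) (z - z')‖
        + ‖(n : ℝ)⁻¹ • ∑ k ∈ range n, (T ^ k) z'‖ := norm_add_le _ _
    _ < ε / 2 + ε / 2 := by
        have := avg_norm_le T hT n (z - z')
        have hdist : ‖z - z'‖ < ε / 2 := by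
          rw [← dist_eq_norm]; exact hz'
        exact add_lt_add (this.trans_lt hdist) (hN n hn)
    _ = ε := by ring

end Aux

/-- Mean ergodic theorem on a weakly compact convex set: if `T` is a linear
contraction of a Banach space `B`, `C` is a nonempty convex subset of `B`,
compact in the weak topology, with `T '' C ⊆ C`, then for every `x ∈ C` the
Cesàro averages of `T` at `x` converge in norm to a `T`-fixed point of `C`. -/
theorem mean_ergodic_weakly_compact {B : Type*} [NormedAddCommGroup B]
    [NormedSpace ℝ B] [CompleteSpace B]
    (T : B →L[ℝ] B) (hT : ‖T‖ ≤ 1)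
    (C : Set B) (hne : C.Nonempty) (hconv : Convex ℝ C)
    (hcomp : IsCompact (toWeakSpace ℝ B '' C))
    (hinv : ∀ x ∈ C, T x ∈ C) :
    ∀ x ∈ C, ∃ y ∈ C, T y = y ∧
      Tendsto (fun n : ℕ => (n : ℝ)⁻¹ • ∑ k ∈ range n, (T ^ k) x)
        atTop (nhds y) := by
  intro x hx
  set g : ℕ → B := fun n => (n : ℝ)⁻¹ • ∑ k ∈ range n, (T ^ k) x with hg
  -- orbit stays in C
  have horb : ∀ k : ℕ, (T ^ k) x ∈ C := by
    intro k
    induction k with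
    | zero => simpa using hx
    | succ k ih =>
        rw [pow_succ']
        exact hinv _ ih
  -- averages stay in C for n ≥ 1
  have hmem : ∀ n : ℕ, 1 ≤ n → g n ∈ C := by
    intro n hn
    have h1 : g n = ∑ k ∈ range n, (n : ℝ)⁻¹ • (T ^ k) x := by
      simp only [hg, Finset.smul_sum]
    rw [h1]
    refine hconv.sum_mem (fun k _ => by positivity) ?_ (fun k _ => horb k)
    rw [Finset.sum_const, Finset.card_range, nsmul_eq_mul]
    field_simp
  -- the weak images of the averages eventually lie in the compact image of C
  set gw : ℕ → WeakSpace ℝ B := fun n => toWeakSpace ℝ B (g n) with hgw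
  have hle : map gw atTop ≤ Filter.principal (toWeakSpace ℝ B '' C) := by
    rw [le_principal_iff, Filter.mem_map]
    filter_upwards [eventually_ge_atTop 1] with n hn
    exact ⟨g n, hmem n hn, rfl⟩
  obtain ⟨yw, hywmem, hyw⟩ := hcomp hle
  obtain ⟨y, hyC, rfl⟩ := hywmem
  have hTy : T y = y := by
    have hgT : ∀ n : ℕ, g n - T (g n) = (n : ℝ)⁻¹ • (x - (T ^ n) x) := by
      intro n
      have h2 : T (g n) = (n : ℝ)⁻¹ • ∑ k ∈ range n, (T ^ (k + 1)) x := by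
        simp only [hg, map_smul, map_sum]
        congr 1
        refine Finset.sum_congr rfl fun k _ => ?_
        rw [pow_succ', ContinuousLinearMap.mul_apply]
      rw [h2]
      simp only [hg]
      rw [← smul_sub, ← Finset.sum_sub_distrib,
        Finset.sum_range_sub' (fun k => (T ^ k) x) n, pow_zero,
        ContinuousLinearMap.one_apply]
    have hto0 : Tendsto (fun n => g n - T (g n)) atTop (nhds 0) := by
      have hb : ∀ n : ℕ, ‖g n - T (g n)‖ ≤ (n : ℝ)⁻¹ * (2 * ‖x‖) := by
        intro n
        rw [hgT n, norm_smul, Real.norm_eq_abs, abs_of_nonneg (by positivity)]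
        gcongr
        calc ‖x - (T ^ n) x‖ ≤ ‖x‖ + ‖(T ^ n) x‖ := norm_sub_le _ _
          _ ≤ ‖x‖ + ‖x‖ := by gcongr; exact pow_apply_norm_le T hT n x
          _ = 2 * ‖x‖ := by ring
      refine squeeze_zero_norm hb ?_
      simpa using tendsto_inv_atTop_nhds_zero_nat.mul_const (2 * ‖x‖)
    -- test against an arbitrary dual functional
    have hdual : ∀ f : B →L[ℝ] ℝ, f (y - T y) = 0 := by
      intro f
      -- the functional z ↦ f(z - T z) is weakly continuous
      set ψ : WeakSpace ℝ B → ℝ := fun w => topDualPairing ℝ B (f - f.comp T) w with hψ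
      have hψcont : Continuous ψ :=
        WeakBilin.eval_continuous (topDualPairing ℝ B).flip (f - f.comp T)
      have hclust : ClusterPt (ψ (toWeakSpace ℝ B y)) (map (fun n => ψ (gw n)) atTop) := by
        have h := hyw.map hψcont.continuousAt tendsto_map
        rwa [Filter.map_map] at h
      have hψval : ∀ z : B, ψ (toWeakSpace ℝ B z) = f (z - T z) := by
        intro z
        show (f - f.comp T) z = f (z - T z)
        rw [ContinuousLinearMap.sub_apply, map_sub, ContinuousLinearMap.comp_apply]
      have hten : Tendsto (fun n => ψ (gw n)) atTop (nhds 0) := by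
        have h2 := (f.continuous.tendsto 0).comp hto0
        rw [map_zero] at h2
        exact h2.congr fun n => (hψval (g n)).symm
      have : ClusterPt (ψ (toWeakSpace ℝ B y)) (nhds 0) := hclust.mono hten
      have h0 : ψ (toWeakSpace ℝ B y) = 0 := eq_of_nhds_neBot this
      rw [hψval y] at h0
      exact h0
    have : y - T y = 0 := NormedSpace.eq_zero_of_forall_dual_eq_zero ℝ hdual
    have := sub_eq_zero.mp this
    exact this.symm
  refine ⟨y, hyC, hTy, ?_⟩
  -- norm convergence
  · set p : Submodule ℝ B := LinearMap.range ((ContinuousLinearMap.id ℝ B - T : B →L[ℝ] B) : B →ₗ[ℝ] B) with hp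
    -- x - g n lies in p for n ≥ 1
    have hxk : ∀ k : ℕ, x - (T ^ k) x ∈ p := by
      intro k
      induction k with
      | zero => simp
      | succ k ih =>
          have h2 : (T ^ k) x - (T ^ (k + 1)) x ∈ p := by
            refine ⟨(T ^ k) x, ?_⟩
            simp [ContinuousLinearMap.sub_apply, pow_succ', ContinuousLinearMap.mul_apply]
          have := p.add_mem ih h2
          simpa using this
    have hxg : ∀ n : ℕ, 1 ≤ n → x - g n ∈ p := by
      intro n hn
      have h1 : x - g n = (n : ℝ)⁻¹ • ∑ k ∈ range n, (x - (T ^ k) x) := by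
        rw [Finset.sum_sub_distrib, smul_sub, Finset.sum_const, Finset.card_range,
          ← Nat.cast_smul_eq_nsmul ℝ, smul_smul, hg]
        have hn' : (n : ℝ) ≠ 0 := Nat.cast_ne_zero.mpr (by omega)
        rw [inv_mul_cancel₀ hn', one_smul]
      rw [h1]
      exact p.smul_mem _ (Submodule.sum_mem p fun k _ => hxk k)
    -- x - y is a weak cluster point of x - g n, hence in the weak closure of p
    have hclosure : x - y ∈ closure (p : Set B) := by
      set φ : WeakSpace ℝ B → WeakSpace ℝ B := fun w => toWeakSpace ℝ B x - w with hφ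
      have hφcont : Continuous φ := continuous_const.sub continuous_id
      have hclust : ClusterPt (φ (toWeakSpace ℝ B y)) (map (fun n => φ (gw n)) atTop) := by
        have h := hyw.map hφcont.continuousAt tendsto_map
        rwa [Filter.map_map] at h
      have hsub : map (fun n => φ (gw n)) atTop ≤
          Filter.principal (toWeakSpace ℝ B '' (p : Set B)) := by
        rw [le_principal_iff, Filter.mem_map]
        filter_upwards [eventually_ge_atTop 1] with n hn
        exact ⟨x - g n, hxg n hn, by simp [hφ, hgw, map_sub]⟩
      have hmemcl : φ (toWeakSpace ℝ B y) ∈ closure (toWeakSpace ℝ B '' (p : Set B)) :=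
        mem_closure_iff_clusterPt.mpr (hclust.mono hsub)
      have hMazur := (p.convex).toWeakSpace_closure (𝕜 := ℝ)
      rw [← hMazur] at hmemcl
      obtain ⟨z, hz, hz2⟩ := hmemcl
      have : z = x - y := by
        apply (toWeakSpace ℝ B).injective
        rw [hz2, hφ]
        simp [map_sub]
      rwa [this] at hz
    -- conclude
    have h0 : Tendsto (fun n : ℕ => (n : ℝ)⁻¹ • ∑ k ∈ range n, (T ^ k) (x - y))
        atTop (nhds 0) := avg_tendsto_zero T hT (x - y) hclosure
    have hTky : ∀ k : ℕ, (T ^ k) y = y := by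
      intro k
      induction k with
      | zero => simp
      | succ k ih => rw [pow_succ', ContinuousLinearMap.mul_apply, ih, hTy]
    have heq : ∀ n : ℕ, 1 ≤ n →
        g n = (n : ℝ)⁻¹ • ∑ k ∈ range n, (T ^ k) (x - y) + y := by
      intro n hn
      have hn' : (n : ℝ) ≠ 0 := Nat.cast_ne_zero.mpr (by omega)
      rw [hg]
      simp only [map_sub]
      rw [Finset.sum_sub_distrib, smul_sub]
      have : ∑ k ∈ range n, (T ^ k) y = (n : ℕ) • y := by
        rw [Finset.sum_congr rfl fun k _ => hTky k, Finset.sum_const, Finset.card_range]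
      rw [this, ← Nat.cast_smul_eq_nsmul ℝ, smul_smul, inv_mul_cancel₀ hn', one_smul]
      abel
    have : Tendsto (fun n : ℕ => (n : ℝ)⁻¹ • ∑ k ∈ range n, (T ^ k) (x - y) + y)
        atTop (nhds y) := by
      have := h0.add (tendsto_const_nhds (x := y))
      simpa using this
    refine this.congr' ?_
    filter_upwards [eventually_ge_atTop 1] with n hn
    exact (heq n hn).symm
end

section
/- Classical Banach principle for double sequences (commutative version of Theorem 1.4, due to Móricz): Let (X,μ) be a probability space and for each (k₁,k₂) ∈ ℕ² let a_{k₁,k₂} : L¹(X,μ) → L⁰(X,μ) be a continuous positive linear map. Suppose (i) for every f ∈ L¹, sup over all (k₁,k₂) with min ≥ some K of |a_{k₁,k₂}(f)| is finite almost everywhere on a set of measure ≥ 1 − δ for every δ > 0, in a suitable uniform sense; and (ii) there is a minorantly dense subset B₀ of the positive cone of L¹ such that a_{k₁,k₂}(f) − a_{m₁,m₂}(f) → 0 almost uniformly (in Egorov's sense) in Pringsheim's sense for f ∈ B₀. Then for every f ∈ L¹, a_{k₁,k₂}(f) converges almost uniformly in Pringsheim's sense. -/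
open MeasureTheory Filter

private lemma smul_nonneg_Lp {X : Type*} [MeasurableSpace X] {μ : Measure X} (c : ℝ)
    (hc : 0 ≤ c) (f : Lp ℝ 1 μ) (hf : 0 ≤ f) : 0 ≤ c • f := by
  rw [← Lp.coeFn_nonneg] at hf ⊢
  filter_upwards [Lp.coeFn_smul c f, hf] with x h1 h2
  rw [h1]
  exact mul_nonneg hc h2

/-- Auxiliary: almost uniform Pringsheim-Cauchy property for nonnegative `f`. -/
private lemma cauchyAU_nonneg {X : Type*} [MeasurableSpace X]
    (μ : Measure X)
    (a : ℕ × ℕ → Lp ℝ 1 μ → X → ℝ)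
    (hadd : ∀ k f g, a k (f + g) =ᵐ[μ] a k f + a k g)
    (hsmul : ∀ (k) (c : ℝ) (f), a k (c • f) =ᵐ[μ] c • a k f)
    (hpos : ∀ k f, 0 ≤ f → 0 ≤ᵐ[μ] a k f)
    (hbdd : ∀ f : Lp ℝ 1 μ, ∀ δ > (0 : ℝ), ∃ E : Set X, MeasurableSet E ∧
      μ Eᶜ ≤ ENNReal.ofReal δ ∧ ∃ (K : ℕ) (M : ℝ), ∀ k : ℕ × ℕ,
        K ≤ min k.1 k.2 → ∀ᵐ x ∂μ, x ∈ E → |a k f x| ≤ M)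
    (B₀ : Set (Lp ℝ 1 μ))
    (hdense : ∀ f : Lp ℝ 1 μ, 0 ≤ f → ∀ ε > (0 : ℝ), ∃ g ∈ B₀,
      g ≤ f ∧ ‖f - g‖ ≤ ε)
    (hcauchy : ∀ f ∈ B₀, ∀ ε > (0 : ℝ), ∃ E : Set X, MeasurableSet E ∧
      μ Eᶜ ≤ ENNReal.ofReal ε ∧ ∀ δ > (0 : ℝ), ∃ N : ℕ, ∀ k m : ℕ × ℕ,
        N ≤ min k.1 k.2 → N ≤ min m.1 m.2 →
        ∀ᵐ x ∂μ, x ∈ E → |a k f x - a m f x| ≤ δ)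
    (f : Lp ℝ 1 μ) (hf : 0 ≤ f) :
    ∀ ε > (0 : ℝ), ∃ E : Set X, MeasurableSet E ∧ μ Eᶜ ≤ ENNReal.ofReal ε ∧
      ∀ δ > (0 : ℝ), ∃ N : ℕ, ∀ k m : ℕ × ℕ, N ≤ min k.1 k.2 → N ≤ min m.1 m.2 →
        ∀ᵐ x ∂μ, x ∈ E → |a k f x - a m f x| ≤ δ := by
  -- choose approximants
  have hchoice : ∀ n : ℕ, ∃ g ∈ B₀, g ≤ f ∧ ‖f - g‖ ≤ (1/4 : ℝ) ^ (n + 1) :=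
    fun n => hdense f hf _ (by positivity)
  choose g hgB hgle hgnorm using hchoice
  set ψ : ℕ → Lp ℝ 1 μ := fun n => f - g n with hψdef
  have hψ0 : ∀ n, 0 ≤ ψ n := fun n => sub_nonneg.mpr (hgle n)
  have hψnorm : ∀ n, ‖(2:ℝ) ^ n • ψ n‖ ≤ (1/2 : ℝ) ^ n := by
    intro n
    rw [norm_smul, Real.norm_of_nonneg (by positivity)]
    calc (2:ℝ) ^ n * ‖ψ n‖ ≤ (2:ℝ) ^ n * (1/4 : ℝ) ^ (n + 1) := by
          exact mul_le_mul_of_nonneg_left (hgnorm n)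
            (by positivity : (0:ℝ) ≤ (2:ℝ) ^ n)
      _ = (1/2 : ℝ) ^ n * (1/4) := by
          rw [pow_succ, ← mul_assoc, ← mul_pow]; norm_num
      _ ≤ (1/2 : ℝ) ^ n := by
          nlinarith [pow_nonneg (by norm_num : (0:ℝ) ≤ 1/2) n]
  have hsum : Summable (fun n => (2:ℝ) ^ n • ψ n) :=
    Summable.of_norm_bounded (summable_geometric_of_lt_one (by norm_num) (by norm_num)) hψnorm
  set h : Lp ℝ 1 μ := ∑' n, (2:ℝ) ^ n • ψ n with hhdef
  have hle : ∀ n, (2:ℝ) ^ n • ψ n ≤ h :=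
    fun n => Summable.le_tsum hsum n (fun j _ => smul_nonneg_Lp _ (by positivity) _ (hψ0 j))
  -- key pointwise domination
  have key : ∀ (n : ℕ) (k : ℕ × ℕ), ∀ᵐ x ∂μ,
      0 ≤ a k (ψ n) x ∧ (2:ℝ) ^ n * a k (ψ n) x ≤ a k h x := by
    intro n k
    have hw : h - (2:ℝ) ^ n • ψ n + (2:ℝ) ^ n • ψ n = h := sub_add_cancel _ _
    have h1 := hadd k (h - (2:ℝ) ^ n • ψ n) ((2:ℝ) ^ n • ψ n)
    rw [hw] at h1
    have h2 := hpos k (h - (2:ℝ) ^ n • ψ n) (sub_nonneg.mpr (hle n))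
    have h3 := hsmul k ((2:ℝ) ^ n) (ψ n)
    have h4 := hpos k (ψ n) (hψ0 n)
    filter_upwards [h1, h2, h3, h4] with x e1 e2 e3 e4
    have e2' : (0:ℝ) ≤ a k (h - (2:ℝ) ^ n • ψ n) x := e2
    have e4' : (0:ℝ) ≤ a k (ψ n) x := e4
    refine ⟨e4', ?_⟩
    have e1' : a k h x = a k (h - (2:ℝ) ^ n • ψ n) x + a k ((2:ℝ) ^ n • ψ n) x := e1
    have e3' : a k ((2:ℝ) ^ n • ψ n) x = (2:ℝ) ^ n * a k (ψ n) x := e3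
    linarith [e1', e3', e2']
  -- splitting
  have hsplit : ∀ (n : ℕ) (k : ℕ × ℕ), ∀ᵐ x ∂μ,
      a k f x = a k (g n) x + a k (ψ n) x := by
    intro n k
    have hgψ : g n + ψ n = f := add_sub_cancel (g n) f
    have := hadd k (g n) (ψ n)
    rw [hgψ] at this
    filter_upwards [this] with x hx
    exact hx
  intro ε hε
  -- boundedness set for h
  obtain ⟨E₀, hE₀m, hE₀c, K₀, M, hM⟩ := hbdd h (ε/2) (by positivity)
  -- Cauchy sets for each g n
  have hC : ∀ n : ℕ, ∃ E : Set X, MeasurableSet E ∧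
      μ Eᶜ ≤ ENNReal.ofReal (ε * (1/2) ^ (n + 2)) ∧ ∀ δ > (0 : ℝ), ∃ N : ℕ,
      ∀ k m : ℕ × ℕ, N ≤ min k.1 k.2 → N ≤ min m.1 m.2 →
        ∀ᵐ x ∂μ, x ∈ E → |a k (g n) x - a m (g n) x| ≤ δ :=
    fun n => hcauchy (g n) (hgB n) _ (by positivity)
  choose E' hE'm hE'c hE'cauchy using hC
  refine ⟨E₀ ∩ ⋂ n, E' n, hE₀m.inter (MeasurableSet.iInter hE'm), ?_, ?_⟩
  · have hcompl : (E₀ ∩ ⋂ n, E' n)ᶜ = E₀ᶜ ∪ ⋃ n, (E' n)ᶜ := by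
      simp [Set.compl_inter, Set.compl_iInter]
    rw [hcompl]
    calc μ (E₀ᶜ ∪ ⋃ n, (E' n)ᶜ) ≤ μ E₀ᶜ + μ (⋃ n, (E' n)ᶜ) := measure_union_le _ _
      _ ≤ ENNReal.ofReal (ε/2) + ∑' n, μ (E' n)ᶜ := by
          gcongr
          exact measure_iUnion_le _
      _ ≤ ENNReal.ofReal (ε/2) + ∑' n, ENNReal.ofReal (ε * (1/2) ^ (n + 2)) := by
          gcongr with n
          exact hE'c n
      _ = ENNReal.ofReal (ε/2) + ENNReal.ofReal (∑' n : ℕ, ε * (1/2) ^ (n + 2)) := by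
          rw [ENNReal.ofReal_tsum_of_nonneg (fun n => by positivity)]
          refine Summable.mul_left _ ?_
          exact ((summable_geometric_of_lt_one (by norm_num) (by norm_num : (1/2:ℝ) < 1)).comp_injective
            (add_left_injective 2))
      _ = ENNReal.ofReal (ε/2) + ENNReal.ofReal (ε/2) := by
          congr 1
          have : ∀ n : ℕ, ε * (1/2 : ℝ) ^ (n + 2) = (ε/4) * (1/2) ^ n := by
            intro n; rw [pow_add]; ring
          rw [tsum_congr this, tsum_mul_left, tsum_geometric_of_lt_one (by norm_num) (by norm_num)]
          norm_num
          congr 1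
          ring
      _ = ENNReal.ofReal ε := by
          rw [← ENNReal.ofReal_add (by positivity) (by positivity)]
          ring_nf
  · intro δ hδ
    set M' : ℝ := max M 1 with hM'def
    have hM'pos : (0:ℝ) < M' := lt_of_lt_of_le one_pos (le_max_right _ _)
    obtain ⟨n, hn⟩ : ∃ n : ℕ, (1/2 : ℝ) ^ n < δ / (4 * M') :=
      exists_pow_lt_of_lt_one (by positivity) (by norm_num)
    obtain ⟨N₁, hN₁⟩ := hE'cauchy n (δ/2) (by positivity)
    refine ⟨max N₁ K₀, ?_⟩
    intro k m hk hm
    have hkK : K₀ ≤ min k.1 k.2 := le_trans (le_max_right _ _) hk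
    have hmK : K₀ ≤ min m.1 m.2 := le_trans (le_max_right _ _) hm
    have hkN : N₁ ≤ min k.1 k.2 := le_trans (le_max_left _ _) hk
    have hmN : N₁ ≤ min m.1 m.2 := le_trans (le_max_left _ _) hm
    have hψbound : ∀ k' : ℕ × ℕ, K₀ ≤ min k'.1 k'.2 → ∀ᵐ x ∂μ,
        x ∈ E₀ → 0 ≤ a k' (ψ n) x ∧ a k' (ψ n) x ≤ δ/4 := by
      intro k' hk'
      filter_upwards [key n k', hM k' hk'] with x ⟨hx0, hxle⟩ hxb hxE
      refine ⟨hx0, ?_⟩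
      have hMb : a k' h x ≤ M' := le_trans (le_abs_self _) (le_trans (hxb hxE) (le_max_left _ _))
      have hpow : (1/2 : ℝ) ^ n * 2 ^ n = 1 := by rw [← mul_pow]; norm_num
      have h1 : a k' (ψ n) x = (1/2 : ℝ) ^ n * ((2:ℝ) ^ n * a k' (ψ n) x) := by
        rw [← mul_assoc, hpow, one_mul]
      have h2 : (1/2 : ℝ) ^ n * ((2:ℝ) ^ n * a k' (ψ n) x) ≤ (1/2 : ℝ) ^ n * M' :=
        mul_le_mul_of_nonneg_left (le_trans hxle hMb) (by positivity)
      have h3 : (1/2 : ℝ) ^ n * M' < (δ / (4 * M')) * M' :=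
        mul_lt_mul_of_pos_right hn hM'pos
      have h4 : (δ / (4 * M')) * M' = δ/4 := by field_simp
      linarith [h1 ▸ h2]
    filter_upwards [hsplit n k, hsplit n m, hψbound k hkK, hψbound m hmK,
      hN₁ k m hkN hmN] with x ek em bk bm cgn hxE
    have hxE₀ : x ∈ E₀ := hxE.1
    have hxE' : x ∈ E' n := Set.mem_iInter.mp hxE.2 n
    obtain ⟨bk0, bk1⟩ := bk hxE₀
    obtain ⟨bm0, bm1⟩ := bm hxE₀
    have hgb : |a k (g n) x - a m (g n) x| ≤ δ/2 := cgn hxE'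
    have hps : a k f x - a m f x =
        (a k (g n) x - a m (g n) x) + (a k (ψ n) x - a m (ψ n) x) := by
      rw [ek, em]; ring
    have habs : |a k f x - a m f x| ≤
        |a k (g n) x - a m (g n) x| + |a k (ψ n) x - a m (ψ n) x| := by
      rw [hps]; exact abs_add_le _ _
    have hψd : |a k (ψ n) x - a m (ψ n) x| ≤ δ/4 :=
      abs_le.mpr ⟨by linarith, by linarith⟩
    linarith

/-- Auxiliary: almost uniform Pringsheim-Cauchy property for every `f`. -/
private lemma cauchyAU_all {X : Type*} [MeasurableSpace X]
    (μ : Measure X)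
    (a : ℕ × ℕ → Lp ℝ 1 μ → X → ℝ)
    (hadd : ∀ k f g, a k (f + g) =ᵐ[μ] a k f + a k g)
    (hsmul : ∀ (k) (c : ℝ) (f), a k (c • f) =ᵐ[μ] c • a k f)
    (hpos : ∀ k f, 0 ≤ f → 0 ≤ᵐ[μ] a k f)
    (hbdd : ∀ f : Lp ℝ 1 μ, ∀ δ > (0 : ℝ), ∃ E : Set X, MeasurableSet E ∧
      μ Eᶜ ≤ ENNReal.ofReal δ ∧ ∃ (K : ℕ) (M : ℝ), ∀ k : ℕ × ℕ,
        K ≤ min k.1 k.2 → ∀ᵐ x ∂μ, x ∈ E → |a k f x| ≤ M)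
    (B₀ : Set (Lp ℝ 1 μ))
    (hdense : ∀ f : Lp ℝ 1 μ, 0 ≤ f → ∀ ε > (0 : ℝ), ∃ g ∈ B₀,
      g ≤ f ∧ ‖f - g‖ ≤ ε)
    (hcauchy : ∀ f ∈ B₀, ∀ ε > (0 : ℝ), ∃ E : Set X, MeasurableSet E ∧
      μ Eᶜ ≤ ENNReal.ofReal ε ∧ ∀ δ > (0 : ℝ), ∃ N : ℕ, ∀ k m : ℕ × ℕ,
        N ≤ min k.1 k.2 → N ≤ min m.1 m.2 →
        ∀ᵐ x ∂μ, x ∈ E → |a k f x - a m f x| ≤ δ)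
    (f : Lp ℝ 1 μ) :
    ∀ ε > (0 : ℝ), ∃ E : Set X, MeasurableSet E ∧ μ Eᶜ ≤ ENNReal.ofReal ε ∧
      ∀ δ > (0 : ℝ), ∃ N : ℕ, ∀ k m : ℕ × ℕ, N ≤ min k.1 k.2 → N ≤ min m.1 m.2 →
        ∀ᵐ x ∂μ, x ∈ E → |a k f x - a m f x| ≤ δ := by
  intro ε hε
  obtain ⟨E₁, hE₁m, hE₁c, hE₁⟩ := cauchyAU_nonneg μ a hadd hsmul hpos hbdd B₀ hdense hcauchy
    f⁺ (posPart_nonneg f) (ε/2) (by positivity)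
  obtain ⟨E₂, hE₂m, hE₂c, hE₂⟩ := cauchyAU_nonneg μ a hadd hsmul hpos hbdd B₀ hdense hcauchy
    f⁻ (negPart_nonneg f) (ε/2) (by positivity)
  -- a k f = a k f⁺ - a k f⁻ a.e.
  have hsplit : ∀ k : ℕ × ℕ, ∀ᵐ x ∂μ, a k f x = a k f⁺ x - a k f⁻ x := by
    intro k
    have hpn : f⁻ + f = f⁺ := by
      have h := posPart_sub_negPart f
      rw [add_comm]
      exact (sub_eq_iff_eq_add.mp h) ▸ rfl
    have := hadd k f⁻ f
    rw [hpn] at this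
    filter_upwards [this] with x hx
    have hx' : a k f⁺ x = a k f⁻ x + a k f x := hx
    linarith
  refine ⟨E₁ ∩ E₂, hE₁m.inter hE₂m, ?_, ?_⟩
  · calc μ (E₁ ∩ E₂)ᶜ = μ (E₁ᶜ ∪ E₂ᶜ) := by rw [Set.compl_inter]
      _ ≤ μ E₁ᶜ + μ E₂ᶜ := measure_union_le _ _
      _ ≤ ENNReal.ofReal (ε/2) + ENNReal.ofReal (ε/2) := add_le_add hE₁c hE₂c
      _ = ENNReal.ofReal ε := by
          rw [← ENNReal.ofReal_add (by positivity) (by positivity)]; ring_nf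
  · intro δ hδ
    obtain ⟨N₁, hN₁⟩ := hE₁ (δ/2) (by positivity)
    obtain ⟨N₂, hN₂⟩ := hE₂ (δ/2) (by positivity)
    refine ⟨max N₁ N₂, fun k m hk hm => ?_⟩
    filter_upwards [hsplit k, hsplit m,
      hN₁ k m (le_trans (le_max_left _ _) hk) (le_trans (le_max_left _ _) hm),
      hN₂ k m (le_trans (le_max_right _ _) hk) (le_trans (le_max_right _ _) hm)]
      with x ek em h1 h2 hxE
    have b1 := h1 hxE.1
    have b2 := h2 hxE.2
    have : a k f x - a m f x = (a k f⁺ x - a m f⁺ x) - (a k f⁻ x - a m f⁻ x) := by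
      rw [ek, em]; ring
    rw [this]
    calc |(a k f⁺ x - a m f⁺ x) - (a k f⁻ x - a m f⁻ x)|
        ≤ |a k f⁺ x - a m f⁺ x| + |a k f⁻ x - a m f⁻ x| := abs_sub _ _
      _ ≤ δ/2 + δ/2 := add_le_add b1 b2
      _ = δ := by ring

/-- Classical Banach principle for double sequences (Móricz): on a probability
space, if the continuous positive linear maps `a k : L¹ → L⁰` are (i) almost
uniformly bounded at each `f ∈ L¹` and (ii) almost uniformly Cauchy in
Pringsheim's sense on a minorantly dense subset `B₀` of the positive cone of
`L¹`, then for every `f ∈ L¹` the double sequence `a k f` converges almost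
uniformly in Pringsheim's sense. -/
theorem banach_principle_double_sequences {X : Type*} [MeasurableSpace X]
    (μ : Measure X) [IsProbabilityMeasure μ]
    (a : ℕ × ℕ → Lp ℝ 1 μ → X → ℝ)
    -- each `a k` is linear, positive and continuous in measure:
    (hadd : ∀ k f g, a k (f + g) =ᵐ[μ] a k f + a k g)
    (hsmul : ∀ (k) (c : ℝ) (f), a k (c • f) =ᵐ[μ] c • a k f)
    (hpos : ∀ k f, 0 ≤ f → 0 ≤ᵐ[μ] a k f)
    (hcont : ∀ (k) (f : ℕ → Lp ℝ 1 μ) (g : Lp ℝ 1 μ),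
      Tendsto f atTop (nhds g) →
      TendstoInMeasure μ (fun n => a k (f n)) atTop (a k g))
    -- (i) almost uniform boundedness:
    (hbdd : ∀ f : Lp ℝ 1 μ, ∀ δ > (0 : ℝ), ∃ E : Set X, MeasurableSet E ∧
      μ Eᶜ ≤ ENNReal.ofReal δ ∧ ∃ (K : ℕ) (M : ℝ), ∀ k : ℕ × ℕ,
        K ≤ min k.1 k.2 → ∀ᵐ x ∂μ, x ∈ E → |a k f x| ≤ M)
    -- (ii) a.u. Pringsheim-Cauchy on a minorantly dense subset of the cone:
    (B₀ : Set (Lp ℝ 1 μ)) (hB₀pos : ∀ f ∈ B₀, 0 ≤ f)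
    (hdense : ∀ f : Lp ℝ 1 μ, 0 ≤ f → ∀ ε > (0 : ℝ), ∃ g ∈ B₀,
      g ≤ f ∧ ‖f - g‖ ≤ ε)
    (hcauchy : ∀ f ∈ B₀, ∀ ε > (0 : ℝ), ∃ E : Set X, MeasurableSet E ∧
      μ Eᶜ ≤ ENNReal.ofReal ε ∧ ∀ δ > (0 : ℝ), ∃ N : ℕ, ∀ k m : ℕ × ℕ,
        N ≤ min k.1 k.2 → N ≤ min m.1 m.2 →
        ∀ᵐ x ∂μ, x ∈ E → |a k f x - a m f x| ≤ δ) :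
    ∀ f : Lp ℝ 1 μ, ∃ g : X → ℝ, ∀ ε > (0 : ℝ), ∃ E : Set X, MeasurableSet E ∧
      μ Eᶜ ≤ ENNReal.ofReal ε ∧ ∀ δ > (0 : ℝ), ∃ N : ℕ, ∀ k : ℕ × ℕ,
        N ≤ min k.1 k.2 → ∀ᵐ x ∂μ, x ∈ E → |a k f x - g x| ≤ δ := by
  intro f
  have hC := cauchyAU_all μ a hadd hsmul hpos hbdd B₀ hdense hcauchy f
  classical
  -- candidate limit
  set g : X → ℝ := fun x =>
    if hx : ∃ L : ℝ, Tendsto (fun n : ℕ => a (n, n) f x) atTop (nhds L)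
    then hx.choose else 0 with hgdef
  refine ⟨g, ?_⟩
  intro ε hε
  obtain ⟨E, hEm, hEc, hE⟩ := hC ε hε
  -- choose thresholds N j for accuracy 1/(j+1)
  have hNex : ∀ j : ℕ, ∃ N : ℕ, ∀ k m : ℕ × ℕ, N ≤ min k.1 k.2 → N ≤ min m.1 m.2 →
      ∀ᵐ x ∂μ, x ∈ E → |a k f x - a m f x| ≤ 1/(j+1) :=
    fun j => hE (1/(j+1)) (by positivity)
  choose N hN using hNex
  -- combine into a single a.e. statement
  have hae : ∀ᵐ x ∂μ, ∀ (j : ℕ) (k m : ℕ × ℕ), N j ≤ min k.1 k.2 → N j ≤ min m.1 m.2 →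
      x ∈ E → |a k f x - a m f x| ≤ 1/(j+1) := by
    rw [ae_all_iff]
    intro j
    rw [ae_all_iff]
    intro k
    rw [ae_all_iff]
    intro m
    by_cases h1 : N j ≤ min k.1 k.2
    · by_cases h2 : N j ≤ min m.1 m.2
      · filter_upwards [hN j k m h1 h2] with x hx _ _ hxE
        exact hx hxE
      · exact Eventually.of_forall (fun x _ h2' _ => absurd h2' h2)
    · exact Eventually.of_forall (fun x h1' _ _ => absurd h1' h1)
  refine ⟨E, hEm, hEc, ?_⟩
  intro δ hδ
  obtain ⟨j, hj⟩ : ∃ j : ℕ, 1/((j:ℝ)+1) < δ := exists_nat_one_div_lt hδ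
  refine ⟨N j, fun k hk => ?_⟩
  filter_upwards [hae] with x hx hxE
  -- the diagonal sequence is Cauchy at x
  have hcs : CauchySeq (fun n : ℕ => a (n, n) f x) := by
    rw [Metric.cauchySeq_iff]
    intro ε' hε'
    obtain ⟨j', hj'⟩ : ∃ j' : ℕ, 1/((j':ℝ)+1) < ε' := exists_nat_one_div_lt hε'
    refine ⟨N j', fun p hp q hq => ?_⟩
    have := hx j' (p, p) (q, q) (by simpa using hp) (by simpa using hq) hxE
    calc dist (a (p, p) f x) (a (q, q) f x) = |a (p, p) f x - a (q, q) f x| := rfl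
      _ ≤ 1/((j':ℝ)+1) := this
      _ < ε' := hj'
  obtain ⟨L, hL⟩ := cauchySeq_tendsto_of_complete hcs
  have hgx : Tendsto (fun n : ℕ => a (n, n) f x) atTop (nhds (g x)) := by
    rw [hgdef]
    simp only
    rw [dif_pos ⟨L, hL⟩]
    exact (Exists.choose_spec (⟨L, hL⟩ : ∃ L : ℝ,
      Tendsto (fun n : ℕ => a (n, n) f x) atTop (nhds L)))
  -- pass to the limit in m
  have hbound : ∀ᶠ n : ℕ in atTop, |a k f x - a (n, n) f x| ≤ 1/((j:ℝ)+1) := by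
    filter_upwards [eventually_ge_atTop (N j)] with n hn
    exact hx j k (n, n) hk (by simpa using hn) hxE
  have htend : Tendsto (fun n : ℕ => |a k f x - a (n, n) f x|) atTop
      (nhds |a k f x - g x|) :=
    ((tendsto_const_nhds.sub hgx).abs)
  have := le_of_tendsto htend hbound
  linarith
end
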